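/- Let μ be an n-AD-regular measure on ℝ^{n+1} with constant C_0 and let {Q_j}_{j ∈ J} be a countable family of subsets of ℝ^{n+1} with associated centers x_j and side lengths ℓ_j > 0 such that: (i) the balls B(x_j, 4ℓ_j) are pairwise disjoint; (ii) ℓ_j^n ≤ C_1 μ(Q_j) and Q_j ⊂ B(x_j, ℓ_j) with x_j ∈ supp μ. Define the measure ξ = Σ_j ℓ_j^{-1} L^{n+1}|_{B(x_j, 3ℓ_j)}, where L^{n+1} is Lebesgue measure. Then ξ has n-polynomial growth: ξ(B(x, r)) ≤ C r^n for all x ∈ ℝ^{n+1} and r > 0, with C depending only on n, C_0, C_1. -/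

import Mathlib

open MeasureTheory Metric

section Aux

lemma tsum_le_of_unique {ι : Type*} {f : ι → ENNReal} {c : ENNReal}
    (hc : ∀ j, f j ≤ c) (h : ∀ i j, f i ≠ 0 → f j ≠ 0 → i = j) : ∑' i, f i ≤ c := by
  by_cases he : ∃ j, f j ≠ 0
  · obtain ⟨j₀, hj₀⟩ := he
    rw [tsum_eq_single j₀ fun b hb => by
      by_contra hfb; exact hb (h b j₀ hfb hj₀)]
    exact hc j₀
  · push_neg at he
    simp [he]

variable {n : ℕ}

local notation "E" => EuclideanSpace ℝ (Fin (n + 1))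

lemma supp_compl_null (μ : Measure E) :
    μ {w : E | ∀ ρ : ℝ, 0 < ρ → 0 < μ (ball w ρ)}ᶜ = 0 := by
  set S := {w : E | ∀ ρ : ℝ, 0 < ρ → 0 < μ (ball w ρ)} with hS
  have key : ∀ w : ↥Sᶜ, ∃ ρ : ℝ, 0 < ρ ∧ μ (ball (w : E) ρ) = 0 := by
    rintro ⟨w, hw⟩
    simp only [hS, Set.mem_compl_iff, Set.mem_setOf_eq, not_forall] at hw
    obtain ⟨ρ, hρ, h⟩ := hw
    exact ⟨ρ, hρ, le_zero_iff.mp (not_lt.mp h)⟩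
  choose ρ hρ h0 using key
  obtain ⟨T, hTc, hTU⟩ := TopologicalSpace.isOpen_iUnion_countable
    (fun w : ↥Sᶜ => ball (w : E) (ρ w)) (fun _ => isOpen_ball)
  refine le_antisymm ?_ zero_le
  calc μ Sᶜ ≤ μ (⋃ w ∈ T, ball (w : E) (ρ w)) := by
        refine measure_mono ?_
        rw [hTU]
        exact fun w hw => Set.mem_iUnion.mpr ⟨⟨w, hw⟩, mem_ball_self (hρ _)⟩
    _ = 0 := (measure_biUnion_null_iff hTc).2 fun w _ => h0 w

lemma net_bound {C₀ : ℝ} (hC₀ : 0 < C₀) (μ : Measure E) {S : Set E} {p : E}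
    (hp : p ∈ S) {D : ℝ} (hD : 0 < D)
    (hdiam : ∀ a ∈ S, ∀ b ∈ S, dist a b ≤ D)
    (hup : ∀ q ∈ S, μ (ball q (D / 2)) ≤ ENNReal.ofReal (C₀ * (D / 2) ^ n)) :
    μ S ≤ ENNReal.ofReal (8 ^ (n + 1) * C₀ * D ^ n) := by
  classical
  -- maximal (D/2)-separated subset of S
  obtain ⟨G, hGmax⟩ := zorn_subset
      {G : Set E | G ⊆ S ∧ G.Pairwise fun a b => D / 2 ≤ dist a b} (by
    intro c hc hchain
    refine ⟨⋃₀ c, ⟨Set.sUnion_subset fun t ht => (hc ht).1, ?_⟩, fun s hs => Set.subset_sUnion_of_mem hs⟩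
    rintro a ⟨t₁, ht₁, ha⟩ b ⟨t₂, ht₂, hb⟩ hab
    rcases hchain.total ht₁ ht₂ with h | h
    · exact (hc ht₂).2 (h ha) hb hab
    · exact (hc ht₁).2 ha (h hb) hab)
  obtain ⟨⟨hGS, hGsep⟩, hGm⟩ := hGmax
  have hsymm : Symmetric fun a b : E => D / 2 ≤ dist a b := fun a b h => by
    dsimp only at h ⊢; rwa [dist_comm]
  have hcover : S ⊆ ⋃ g ∈ G, ball g (D / 2) := by
    intro s hs
    by_contra hns
    simp only [Set.mem_iUnion, mem_ball, not_exists, not_lt] at hns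
    have hins : insert s G ∈ {G : Set E | G ⊆ S ∧ G.Pairwise fun a b => D / 2 ≤ dist a b} := by
      refine ⟨Set.insert_subset hs hGS, Set.pairwise_insert.2 ⟨hGsep, ?_⟩⟩
      intro g hg _
      exact ⟨hns g hg, hsymm (hns g hg)⟩
    have : s ∈ G := hGm hins (Set.subset_insert _ _) (Set.mem_insert _ _)
    have := hns s this
    rw [dist_self] at this
    linarith
  -- G is finite
  have hGb : G ⊆ closedBall p D := fun g hg => mem_closedBall.2 (hdiam g (hGS hg) p hp)
  obtain ⟨t, htf, htcov⟩ := (Metric.totallyBounded_iff.1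
    (isCompact_closedBall p D).totallyBounded) (D / 4) (by linarith)
  have hchoice : ∀ g ∈ G, ∃ y ∈ t, g ∈ ball y (D / 4) := by
    intro g hg
    have := htcov (hGb hg)
    simpa using this
  choose! y hyt hyb using hchoice
  have hGfin : G.Finite := by
    refine Set.Finite.of_finite_image (f := y) (htf.subset ?_) ?_
    · rintro _ ⟨g, hg, rfl⟩; exact hyt g hg
    · intro a ha b hb hy
      by_contra hab
      have h1 := hyb a ha
      have h2 := hyb b hb
      rw [hy] at h1
      have := hGsep ha hb hab
      have : dist a b ≤ dist a (y b) + dist (y b) b := dist_triangle _ _ _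
      rw [mem_ball] at h1 h2
      rw [dist_comm (y b) b] at this
      linarith [hGsep ha hb hab]
  set F := hGfin.toFinset with hF
  have hFG : (F : Set E) = G := hGfin.coe_toFinset
  -- cardinality bound via volume
  set v := volume (ball (0 : E) 1) with hv
  have hv0 : v ≠ 0 := (measure_ball_pos _ _ one_pos).ne'
  have hvt : v ≠ ⊤ := measure_ball_lt_top.ne
  have hfr : Module.finrank ℝ E = n + 1 := finrank_euclideanSpace_fin
  have hvball : ∀ (q : E) (ρ : ℝ), 0 < ρ →
      volume (ball q ρ) = ENNReal.ofReal (ρ ^ (n + 1)) * v := by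
    intro q ρ hρ
    rw [Measure.addHaar_ball_of_pos volume q hρ, hfr]
  have hdisjballs : (F : Set E).PairwiseDisjoint fun g => ball g (D / 4) := by
    intro a ha b hb hab
    rw [hFG] at ha hb
    exact ball_disjoint_ball (by linarith [hGsep ha hb hab])
  have hsum : ∑ g ∈ F, volume (ball g (D / 4)) ≤ ENNReal.ofReal ((2 * D) ^ (n + 1)) * v := by
    rw [← measure_biUnion_finset hdisjballs fun _ _ => measurableSet_ball]
    rw [← hvball p (2 * D) (by linarith)]
    refine measure_mono ?_
    intro w hw
    simp only [Set.mem_iUnion] at hw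
    obtain ⟨g, hg, hwg⟩ := hw
    rw [mem_ball] at hwg ⊢
    have hgp : dist g p ≤ D := hdiam g (hGS (hFG ▸ hg)) p hp
    calc dist w p ≤ dist w g + dist g p := dist_triangle _ _ _
      _ < D / 4 + D := by linarith
      _ ≤ 2 * D := by linarith
  have hcardE : (F.card : ENNReal) * ENNReal.ofReal ((D / 4) ^ (n + 1)) * v
      ≤ ENNReal.ofReal ((2 * D) ^ (n + 1)) * v := by
    calc (F.card : ENNReal) * ENNReal.ofReal ((D / 4) ^ (n + 1)) * v
        = ∑ g ∈ F, volume (ball g (D / 4)) := by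
          rw [Finset.sum_congr rfl fun g _ => hvball g (D / 4) (by linarith)]
          rw [Finset.sum_const, nsmul_eq_mul, mul_assoc]
      _ ≤ _ := hsum
  have hcard' : (F.card : ENNReal) * ENNReal.ofReal ((D / 4) ^ (n + 1))
      ≤ ENNReal.ofReal ((2 * D) ^ (n + 1)) :=
    (ENNReal.mul_le_mul_iff_left hv0 hvt).1 hcardE
  have hcardR : (F.card : ℝ) * (D / 4) ^ (n + 1) ≤ (2 * D) ^ (n + 1) := by
    rw [← ENNReal.ofReal_natCast, ← ENNReal.ofReal_mul (by positivity)] at hcard'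
    exact (ENNReal.ofReal_le_ofReal_iff (by positivity)).1 hcard'
  have hcard8 : (F.card : ℝ) ≤ 8 ^ (n + 1) := by
    have h2D : (2 * D) ^ (n + 1) = 8 ^ (n + 1) * (D / 4) ^ (n + 1) := by
      rw [← mul_pow]; ring_nf
    have hpos : (0 : ℝ) < (D / 4) ^ (n + 1) := by positivity
    rw [h2D] at hcardR
    exact le_of_mul_le_mul_right hcardR hpos
  -- final bound
  calc μ S ≤ μ (⋃ g ∈ F, ball g (D / 2)) := measure_mono (by
        rw [← hFG] at hcover; simpa using hcover)
    _ ≤ ∑ g ∈ F, μ (ball g (D / 2)) := measure_biUnion_finset_le _ _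
    _ ≤ ∑ _g ∈ F, ENNReal.ofReal (C₀ * (D / 2) ^ n) := by
        refine Finset.sum_le_sum fun g hg => hup g (hGS (hFG ▸ hg))
    _ = (F.card : ENNReal) * ENNReal.ofReal (C₀ * (D / 2) ^ n) := by
        rw [Finset.sum_const, nsmul_eq_mul]
    _ ≤ ENNReal.ofReal (8 ^ (n + 1) * C₀ * D ^ n) := by
        rw [← ENNReal.ofReal_natCast, ← ENNReal.ofReal_mul (by positivity)]
        refine ENNReal.ofReal_le_ofReal ?_
        have h1 : (D / 2) ^ n ≤ D ^ n := by
          apply pow_le_pow_left₀ (by positivity) (by linarith)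
        have h2 : (0 : ℝ) ≤ C₀ * (D / 2) ^ n := by positivity
        calc (F.card : ℝ) * (C₀ * (D / 2) ^ n) ≤ 8 ^ (n + 1) * (C₀ * (D / 2) ^ n) :=
              mul_le_mul_of_nonneg_right hcard8 h2
          _ ≤ 8 ^ (n + 1) * (C₀ * D ^ n) := by
              have : (0 : ℝ) ≤ (8:ℝ) ^ (n+1) * C₀ := by positivity
              nlinarith
          _ = 8 ^ (n + 1) * C₀ * D ^ n := by ring

end Aux

section Growth
variable {n : ℕ}
local notation "E" => EuclideanSpace ℝ (Fin (n + 1))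

lemma growth_bound {C₀ : ℝ} (hC₀ : 0 < C₀) (μ : Measure E) {S : Set E}
    (hS0 : μ Sᶜ = 0)
    (hAD : ∀ z ∈ S, ∀ r : ℝ, 0 < r → ENNReal.ofReal r ≤ EMetric.diam S →
      μ (ball z r) ≤ ENNReal.ofReal (C₀ * r ^ n))
    (hpos : 0 < EMetric.diam S) {p : E} (hp : p ∈ S) {R : ℝ} (hR : 0 < R) :
    μ (ball p R) ≤ ENNReal.ofReal ((8 ^ (n + 1) + 1) * C₀ * R ^ n) := by
  by_cases hle : ENNReal.ofReal R ≤ EMetric.diam S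
  · refine (hAD p hp R hR hle).trans (ENNReal.ofReal_le_ofReal ?_)
    have h1 : (0 : ℝ) ≤ 8 ^ (n + 1) := by positivity
    have h2 : (0 : ℝ) ≤ C₀ * R ^ n := by positivity
    nlinarith
  · push_neg at hle
    have hne : EMetric.diam S ≠ ⊤ := ne_top_of_lt (hle.trans_le le_top)
    set D := (EMetric.diam S).toReal with hD
    have hDpos : 0 < D := ENNReal.toReal_pos hpos.ne' hne
    have hDR : D ≤ R := by
      have := ENNReal.toReal_mono ENNReal.ofReal_ne_top hle.le
      rwa [ENNReal.toReal_ofReal hR.le] at this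
    have hdiam : ∀ a ∈ S, ∀ b ∈ S, dist a b ≤ D := fun a ha b hb =>
      Metric.dist_le_diam_of_mem' hne ha hb
    have hup : ∀ q ∈ S, μ (ball q (D / 2)) ≤ ENNReal.ofReal (C₀ * (D / 2) ^ n) := by
      intro q hq
      refine hAD q hq (D / 2) (by linarith) ?_
      calc ENNReal.ofReal (D / 2) ≤ ENNReal.ofReal D := ENNReal.ofReal_le_ofReal (by linarith)
        _ = EMetric.diam S := ENNReal.ofReal_toReal hne
    calc μ (ball p R) = μ ((ball p R ∩ S) ∪ (ball p R \ S)) := by rw [Set.inter_union_diff]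
      _ ≤ μ (ball p R ∩ S) + μ (ball p R \ S) := measure_union_le _ _
      _ ≤ μ S + 0 := by
          refine add_le_add (measure_mono Set.inter_subset_right) ?_
          rw [← hS0]
          exact measure_mono (Set.diff_subset_compl _ _)
      _ = μ S := by rw [add_zero]
      _ ≤ ENNReal.ofReal (8 ^ (n + 1) * C₀ * D ^ n) := net_bound hC₀ μ hp hDpos hdiam hup
      _ ≤ ENNReal.ofReal ((8 ^ (n + 1) + 1) * C₀ * R ^ n) := by
          refine ENNReal.ofReal_le_ofReal ?_
          have h1 : D ^ n ≤ R ^ n := pow_le_pow_left₀ hDpos.le hDR n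
          have h2 : (0 : ℝ) ≤ 8 ^ (n + 1) * C₀ := by positivity
          nlinarith [mul_le_mul_of_nonneg_left h1 h2, pow_nonneg hR.le n]

end Growth
/-- The auxiliary measure `ξ = Σ_j ℓ_j^{-1} L^{n+1}|_{B(x_j,3ℓ_j)}` built from cubes
inside pairwise disjoint balls over an `n`-AD-regular measure has `n`-polynomial growth. -/
theorem stmt_7 (n : ℕ) (C₀ C₁ : ℝ) (hC₀ : 0 < C₀) (hC₁ : 0 < C₁) :
    ∃ C : ℝ, 0 < C ∧
      ∀ (μ : Measure (EuclideanSpace ℝ (Fin (n + 1))))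
        (J : Type) [Countable J],
      ∀ (Q : J → Set (EuclideanSpace ℝ (Fin (n + 1))))
        (x : J → EuclideanSpace ℝ (Fin (n + 1)))
        (ℓ : J → ℝ),
        -- μ is n-AD-regular with constant C₀
        (∀ z ∈ {w : EuclideanSpace ℝ (Fin (n + 1)) |
            ∀ ρ : ℝ, 0 < ρ → 0 < μ (Metric.ball w ρ)},
          ∀ r : ℝ, 0 < r →
            ENNReal.ofReal r ≤ EMetric.diam {w : EuclideanSpace ℝ (Fin (n + 1)) |
              ∀ ρ : ℝ, 0 < ρ → 0 < μ (Metric.ball w ρ)} →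
            ENNReal.ofReal (C₀⁻¹ * r ^ n) ≤ μ (Metric.ball z r) ∧
              μ (Metric.ball z r) ≤ ENNReal.ofReal (C₀ * r ^ n)) →
        (∀ j, 0 < ℓ j) →
        -- (i) the balls B(x_j, 4ℓ_j) are pairwise disjoint
        (Pairwise fun i j =>
          Disjoint (Metric.ball (x i) (4 * ℓ i)) (Metric.ball (x j) (4 * ℓ j))) →
        -- (ii) ℓ_j^n ≤ C₁ μ(Q_j), Q_j ⊆ B(x_j, ℓ_j), x_j ∈ supp μ
        (∀ j, ENNReal.ofReal (ℓ j ^ n) ≤ ENNReal.ofReal C₁ * μ (Q j)) →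
        (∀ j, Q j ⊆ Metric.ball (x j) (ℓ j)) →
        (∀ j, x j ∈ {w : EuclideanSpace ℝ (Fin (n + 1)) |
          ∀ ρ : ℝ, 0 < ρ → 0 < μ (Metric.ball w ρ)}) →
        ∀ (z : EuclideanSpace ℝ (Fin (n + 1))) (r : ℝ), 0 < r →
          (Measure.sum fun j => (ENNReal.ofReal ((ℓ j)⁻¹)) •
              (volume.restrict (Metric.ball (x j) (3 * ℓ j)))) (Metric.ball z r)
            ≤ ENNReal.ofReal (C * r ^ n) := by
  classical
  set ω : ℝ := (volume (ball (0 : EuclideanSpace ℝ (Fin (n + 1))) 1)).toReal with hω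
  set v : ENNReal := volume (ball (0 : EuclideanSpace ℝ (Fin (n + 1))) 1) with hv
  have hv0 : v ≠ 0 := (measure_ball_pos _ _ one_pos).ne'
  have hvt : v ≠ ⊤ := measure_ball_lt_top.ne
  have hωpos : 0 < ω := ENNReal.toReal_pos hv0 hvt
  have hωv : ENNReal.ofReal ω = v := ENNReal.ofReal_toReal hvt
  set X : ℝ := C₁ * ((8 ^ (n + 1) + 1) * C₀ * 12 ^ n) with hX
  have hXpos : 0 < X := by
    have : (0:ℝ) < (8 ^ (n + 1) + 1) * C₀ * 12 ^ n := by positivity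
    exact mul_pos hC₁ this
  refine ⟨3 ^ (n + 1) * ω * (1 + X) + ω, by positivity, ?_⟩
  intro μ J _ Q x ℓ hAD hℓ hdisj hQμ hQb hxS z r hr
  set S := {w : EuclideanSpace ℝ (Fin (n + 1)) | ∀ ρ : ℝ, 0 < ρ → 0 < μ (ball w ρ)} with hSdef
  have hup : ∀ z ∈ S, ∀ ρ : ℝ, 0 < ρ → ENNReal.ofReal ρ ≤ EMetric.diam S →
      μ (ball z ρ) ≤ ENNReal.ofReal (C₀ * ρ ^ n) := fun w hw ρ hρ hd => (hAD w hw ρ hρ hd).2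
  have hfr : Module.finrank ℝ (EuclideanSpace ℝ (Fin (n + 1))) = n + 1 := finrank_euclideanSpace_fin
  have hvball : ∀ (q : EuclideanSpace ℝ (Fin (n + 1))) (ρ : ℝ), 0 < ρ →
      volume (ball q ρ) = ENNReal.ofReal (ρ ^ (n + 1)) * v := by
    intro q ρ hρ
    rw [Measure.addHaar_ball_of_pos volume q hρ, hfr]
  -- unfold the sum
  rw [Measure.sum_apply _ measurableSet_ball]
  simp only [Measure.smul_apply, Measure.restrict_apply measurableSet_ball, smul_eq_mul]
  set T : J → ENNReal := fun j =>
    ENNReal.ofReal (ℓ j)⁻¹ * volume (ball z r ∩ ball (x j) (3 * ℓ j)) with hT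
  set P : J → Prop := fun j => (ball z r ∩ ball (x j) (3 * ℓ j)).Nonempty with hP
  have hPd : ∀ j, P j → dist z (x j) < r + 3 * ℓ j := by
    intro j ⟨y, hy1, hy2⟩
    rw [mem_ball] at hy1 hy2
    calc dist z (x j) ≤ dist z y + dist y (x j) := dist_triangle _ _ _
      _ < r + 3 * ℓ j := by rw [dist_comm z y]; linarith
  have bound1 : ∀ j, T j ≤ ENNReal.ofReal (3 ^ (n + 1) * ℓ j ^ n) * v := by
    intro j
    calc T j ≤ ENNReal.ofReal (ℓ j)⁻¹ * volume (ball (x j) (3 * ℓ j)) :=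
          mul_le_mul_right (measure_mono Set.inter_subset_right) _
      _ = ENNReal.ofReal (ℓ j)⁻¹ * (ENNReal.ofReal ((3 * ℓ j) ^ (n + 1)) * v) := by
          rw [hvball (x j) (3 * ℓ j) (by have := hℓ j; linarith)]
      _ = ENNReal.ofReal ((ℓ j)⁻¹ * (3 * ℓ j) ^ (n + 1)) * v := by
          rw [← mul_assoc, ← ENNReal.ofReal_mul (inv_nonneg.mpr (hℓ j).le)]
      _ = ENNReal.ofReal (3 ^ (n + 1) * ℓ j ^ n) * v := by
          have hre : (ℓ j)⁻¹ * (3 * ℓ j) ^ (n + 1) = 3 ^ (n + 1) * ℓ j ^ n := by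
            have h := (hℓ j).ne'
            field_simp
            ring
          rw [hre]
  have bound2 : ∀ j, r < ℓ j → T j ≤ ENNReal.ofReal (r ^ n) * v := by
    intro j hrℓ
    calc T j ≤ ENNReal.ofReal (ℓ j)⁻¹ * volume (ball z r) :=
          mul_le_mul_right (measure_mono Set.inter_subset_left) _
      _ = ENNReal.ofReal ((ℓ j)⁻¹ * r ^ (n + 1)) * v := by
          rw [hvball z r hr, ← mul_assoc, ← ENNReal.ofReal_mul (inv_nonneg.mpr (hℓ j).le)]
      _ ≤ ENNReal.ofReal (r ^ n) * v := by
          refine mul_le_mul_left (ENNReal.ofReal_le_ofReal ?_) v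
          rw [inv_mul_le_iff₀ (hℓ j), pow_succ]
          nlinarith [pow_nonneg hr.le n]
  have hzball : ∀ j, ℓ j ≤ r → P j → ball (x j) (4 * ℓ j) ⊆ ball z (8 * r) := by
    intro j hjr hPj w hw
    rw [mem_ball] at hw ⊢
    have h1 := hPd j hPj
    calc dist w z ≤ dist w (x j) + dist (x j) z := dist_triangle _ _ _
      _ < 4 * ℓ j + (r + 3 * ℓ j) := by rw [dist_comm (x j) z]; linarith
      _ ≤ 8 * r := by linarith
  set U : J → ENNReal := fun j =>
    if ℓ j ≤ r ∧ P j then ENNReal.ofReal (3 ^ (n + 1) * ℓ j ^ n) * v else 0 with hU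
  set V : J → ENNReal := fun j =>
    if r < ℓ j ∧ P j then ENNReal.ofReal (r ^ n) * v else 0 with hV
  have hTUV : ∀ j, T j ≤ U j + V j := by
    intro j
    by_cases hPj : P j
    · rcases le_or_gt (ℓ j) r with hc | hc
      · refine (bound1 j).trans ?_
        have hUj : U j = ENNReal.ofReal (3 ^ (n + 1) * ℓ j ^ n) * v := by
          simp only [hU]
          exact if_pos ⟨hc, hPj⟩
        rw [hUj]
        exact le_self_add
      · refine (bound2 j hc).trans ?_
        have hVj : V j = ENNReal.ofReal (r ^ n) * v := by
          simp only [hV]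
          exact if_pos ⟨hc, hPj⟩
        rw [hVj]
        exact le_add_self
    · have : T j = 0 := by
        rw [hT]
        simp only
        rw [Set.not_nonempty_iff_eq_empty.mp hPj, measure_empty, mul_zero]
      rw [this]
      exact zero_le
  have hzin : ∀ j, r < ℓ j → P j → z ∈ ball (x j) (4 * ℓ j) := by
    intro j hrℓ hPj
    rw [mem_ball]
    have := hPd j hPj
    linarith
  have hVsum : ∑' j, V j ≤ ENNReal.ofReal (r ^ n) * v := by
    refine tsum_le_of_unique (fun j => ?_) (fun i j hi hj => ?_)
    · simp only [hV]; split_ifs; exacts [le_rfl, zero_le]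
    · simp only [hV] at hi hj
      split_ifs at hi with h1
      · split_ifs at hj with h2
        · by_contra hij
          exact Set.disjoint_left.mp (hdisj hij) (hzin i h1.1 h1.2) (hzin j h2.1 h2.2)
        · exact absurd rfl hj
      · exact absurd rfl hi
  have hUsum : ∑' j, U j ≤ ENNReal.ofReal (3 ^ (n + 1) * ω * (1 + X) * r ^ n) := by
    by_cases hA : ∀ i j, (ℓ i ≤ r ∧ P i) → (ℓ j ≤ r ∧ P j) → i = j
    · -- at most one small cube: direct bound
      refine (tsum_le_of_unique (c := ENNReal.ofReal (3 ^ (n + 1) * r ^ n) * v)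
        (fun j => ?_) (fun i j hi hj => ?_)).trans ?_
      · simp only [hU]
        split_ifs with hc
        · refine mul_le_mul_left (ENNReal.ofReal_le_ofReal ?_) v
          have : ℓ j ^ n ≤ r ^ n := pow_le_pow_left₀ (hℓ j).le hc.1 n
          nlinarith [pow_nonneg (show (0:ℝ) ≤ 3 by norm_num) (n + 1)]
        · exact zero_le
      · simp only [hU] at hi hj
        split_ifs at hi with h1
        · split_ifs at hj with h2
          · exact hA i j h1 h2
          · exact absurd rfl hj
        · exact absurd rfl hi
      · rw [← hωv, ← ENNReal.ofReal_mul (by positivity)]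
        refine ENNReal.ofReal_le_ofReal ?_
        nlinarith [mul_nonneg (mul_nonneg (mul_nonneg (pow_nonneg (show (0:ℝ) ≤ 3 by norm_num) (n + 1)) hωpos.le) hXpos.le) (pow_nonneg hr.le n)]
    · -- at least two small cubes: use AD-regularity of μ
      push_neg at hA
      obtain ⟨i₀, j₀, hi₀, hj₀, hne⟩ := hA
      have hμQpos : ∀ j, μ (Q j) ≠ 0 := by
        intro j h0
        have := hQμ j
        rw [h0, mul_zero, le_zero_iff, ENNReal.ofReal_eq_zero] at this
        exact absurd this (not_le.mpr (pow_pos (hℓ j) n))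
      have hSnull : μ Sᶜ = 0 := supp_compl_null μ
      have hQS : ∀ j, (Q j ∩ S).Nonempty := by
        intro j
        rw [Set.nonempty_iff_ne_empty]
        intro hemp
        refine hμQpos j (le_antisymm ?_ zero_le)
        rw [← hSnull]
        refine measure_mono fun w hw => ?_
        intro hwS
        exact Set.eq_empty_iff_forall_notMem.mp hemp w ⟨hw, hwS⟩
      obtain ⟨p, hpQ, hpS⟩ := hQS i₀
      obtain ⟨q, hqQ, hqS⟩ := hQS j₀
      have hQsub : ∀ j, Q j ⊆ ball (x j) (4 * ℓ j) := fun j =>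
        (hQb j).trans (ball_subset_ball (by have := hℓ j; linarith))
      have hpq : p ≠ q := by
        intro h
        exact Set.disjoint_left.mp (hdisj hne) (hQsub i₀ hpQ) (hQsub j₀ (h ▸ hqQ))
      have hdiampos : 0 < EMetric.diam S := EMetric.diam_pos_iff.mpr ⟨p, hpS, q, hqS, hpq⟩
      -- disjoint measurable enlargement of the Q's
      set R' : J → Set (EuclideanSpace ℝ (Fin (n + 1))) := fun j =>
        if ℓ j ≤ r ∧ P j then toMeasurable μ (Q j) ∩ ball (x j) (4 * ℓ j) else ∅ with hR'
      have hR'meas : ∀ j, MeasurableSet (R' j) := by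
        intro j
        simp only [hR']
        split_ifs
        · exact (measurableSet_toMeasurable μ _).inter measurableSet_ball
        · exact MeasurableSet.empty
      have hR'disj : Pairwise (Function.onFun Disjoint R') := by
        intro i j hij
        simp only [Function.onFun, hR']
        split_ifs
        · exact (hdisj hij).mono Set.inter_subset_right Set.inter_subset_right
        all_goals simp
      have hQR' : ∀ j, (ℓ j ≤ r ∧ P j) → μ (Q j) ≤ μ (R' j) := by
        intro j hc
        simp only [hR']
        simp only [if_pos hc]
        refine measure_mono (Set.subset_inter (subset_toMeasurable μ _) ?_)
        exact hQsub j
      have hR'sub : ∀ j, R' j ⊆ ball z (8 * r) := by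
        intro j
        simp only [hR']
        split_ifs with hc
        · exact Set.inter_subset_right.trans (hzball j hc.1 hc.2)
        · exact Set.empty_subset _
      have hsum1 : ∑' j, μ (R' j) ≤ μ (ball (x i₀) (12 * r)) := by
        rw [← measure_iUnion hR'disj hR'meas]
        refine measure_mono ((Set.iUnion_subset hR'sub).trans fun w hw => ?_)
        rw [mem_ball] at hw ⊢
        have h1 := hPd i₀ hi₀.2
        calc dist w (x i₀) ≤ dist w z + dist z (x i₀) := dist_triangle _ _ _
          _ < 8 * r + (r + 3 * ℓ i₀) := by linarith
          _ ≤ 12 * r := by have := hi₀.1; linarith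
      have hgrowth : μ (ball (x i₀) (12 * r)) ≤
          ENNReal.ofReal ((8 ^ (n + 1) + 1) * C₀ * (12 * r) ^ n) :=
        growth_bound hC₀ μ hSnull hup hdiampos (hxS i₀) (by linarith)
      set c₄ : ENNReal := ENNReal.ofReal (3 ^ (n + 1)) * ENNReal.ofReal C₁ * v with hc₄
      have hUj : ∀ j, U j ≤ c₄ * μ (R' j) := by
        intro j
        simp only [hU]
        split_ifs with hc
        · calc ENNReal.ofReal (3 ^ (n + 1) * ℓ j ^ n) * v
              = ENNReal.ofReal (3 ^ (n + 1)) * v * ENNReal.ofReal (ℓ j ^ n) := by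
                rw [ENNReal.ofReal_mul (by positivity)]; ring
            _ ≤ ENNReal.ofReal (3 ^ (n + 1)) * v * (ENNReal.ofReal C₁ * μ (R' j)) := by
                refine mul_le_mul_right ((hQμ j).trans ?_) _
                exact mul_le_mul_right (hQR' j hc) _
            _ = c₄ * μ (R' j) := by rw [hc₄]; ring
        · exact zero_le
      calc ∑' j, U j ≤ ∑' j, c₄ * μ (R' j) := ENNReal.tsum_le_tsum hUj
        _ = c₄ * ∑' j, μ (R' j) := ENNReal.tsum_mul_left
        _ ≤ c₄ * ENNReal.ofReal ((8 ^ (n + 1) + 1) * C₀ * (12 * r) ^ n) :=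
            mul_le_mul_right (hsum1.trans hgrowth) _
        _ ≤ ENNReal.ofReal (3 ^ (n + 1) * ω * (1 + X) * r ^ n) := by
            rw [hc₄, ← hωv, ← ENNReal.ofReal_mul (by positivity),
              ← ENNReal.ofReal_mul (by positivity), ← ENNReal.ofReal_mul (by positivity)]
            refine ENNReal.ofReal_le_ofReal ?_
            rw [hX, mul_pow]
            nlinarith [mul_nonneg (mul_nonneg (pow_nonneg (show (0:ℝ) ≤ 3 by norm_num) (n + 1)) hωpos.le) (pow_nonneg hr.le n)]
  calc ∑' j, T j ≤ ∑' j, (U j + V j) := ENNReal.tsum_le_tsum hTUV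
    _ = ∑' j, U j + ∑' j, V j := ENNReal.tsum_add
    _ ≤ ENNReal.ofReal (3 ^ (n + 1) * ω * (1 + X) * r ^ n) + ENNReal.ofReal (r ^ n) * v :=
        add_le_add hUsum hVsum
    _ ≤ ENNReal.ofReal ((3 ^ (n + 1) * ω * (1 + X) + ω) * r ^ n) := by
        rw [← hωv, ← ENNReal.ofReal_mul (by positivity), ← ENNReal.ofReal_add (by positivity) (by positivity)]
        refine ENNReal.ofReal_le_ofReal (le_of_eq ?_)
        ring
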